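/- Let M be a positive natural number. A continuous function f : (Fin M → ℝ) → ℝ is permutation-invariant if and only if there exist a continuous function ψ : ℝ → (Fin M → ℝ) and a continuous function ρ : (Fin M → ℝ) → ℝ such that f x = ρ (∑ i, ψ (x i)) for every x : Fin M → ℝ. -/

import Mathlib

open Finset

noncomputable def phiAux (M : ℕ) : (Fin M → ℝ) → (Fin M → ℝ) :=
  fun x i => ∑ j, (x j) ^ ((i : ℕ) + 1)

lemma phiAux_continuous (M : ℕ) : Continuous (phiAux M) :=
  continuous_pi fun i => continuous_finset_sum _ fun j _ => (continuous_apply j).pow _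

-- Newton step
lemma esymm_eq_of_psum_eq (M : ℕ) (x y : Fin M → ℝ)
    (h : ∀ k, 1 ≤ k → k ≤ M → ∑ j, x j ^ k = ∑ j, y j ^ k) :
    ∀ k, k ≤ M → MvPolynomial.aeval x (MvPolynomial.esymm (Fin M) ℝ k)
      = MvPolynomial.aeval y (MvPolynomial.esymm (Fin M) ℝ k) := by
  intro k
  induction k using Nat.strong_induction_on with
  | _ k ih =>
    intro hkM
    rcases Nat.eq_zero_or_pos k with rfl | hk
    · simp [MvPolynomial.esymm_zero]
    · have hx := congrArg (MvPolynomial.aeval x) (MvPolynomial.mul_esymm_eq_sum (Fin M) ℝ k)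
      have hy := congrArg (MvPolynomial.aeval y) (MvPolynomial.mul_esymm_eq_sum (Fin M) ℝ k)
      simp only [map_mul, map_sum, map_pow, map_neg, map_one, map_natCast] at hx hy
      have hterm : ∀ a ∈ (Finset.HasAntidiagonal.antidiagonal k).filter (fun a => a.1 < k),
          (-1 : ℝ) ^ a.1
              * (MvPolynomial.aeval x) (MvPolynomial.esymm (Fin M) ℝ a.1)
              * (MvPolynomial.aeval x) (MvPolynomial.psum (Fin M) ℝ a.2)
            = (-1 : ℝ) ^ a.1
              * (MvPolynomial.aeval y) (MvPolynomial.esymm (Fin M) ℝ a.1)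
              * (MvPolynomial.aeval y) (MvPolynomial.psum (Fin M) ℝ a.2) := by
        intro a ha
        rw [Finset.mem_filter, Finset.HasAntidiagonal.mem_antidiagonal] at ha
        obtain ⟨hsum, hlt⟩ := ha
        have h1 : (MvPolynomial.aeval x) (MvPolynomial.esymm (Fin M) ℝ a.1)
            = (MvPolynomial.aeval y) (MvPolynomial.esymm (Fin M) ℝ a.1) :=
          ih a.1 hlt (le_trans (le_of_lt hlt) hkM)
        have h2 : (MvPolynomial.aeval x) (MvPolynomial.psum (Fin M) ℝ a.2)
            = (MvPolynomial.aeval y) (MvPolynomial.psum (Fin M) ℝ a.2) := by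
          have hp1 : 1 ≤ a.2 := by omega
          have hp2 : a.2 ≤ M := by omega
          have := h a.2 hp1 hp2
          simp only [MvPolynomial.psum, map_sum, map_pow, MvPolynomial.aeval_X]
          exact this
        rw [h1, h2]
      have hkne : ((k : ℝ)) ≠ 0 := Nat.cast_ne_zero.mpr hk.ne'
      apply mul_left_cancel₀ hkne
      rw [hx, hy]
      congr 1
      exact Finset.sum_congr rfl hterm

lemma exists_perm_of_multiset_eq {M : ℕ} {x y : Fin M → ℝ}
    (h : Multiset.map x Finset.univ.val = Multiset.map y Finset.univ.val) :
    ∃ σ : Equiv.Perm (Fin M), x ∘ σ = y := by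
  rw [Fin.univ_val_map, Fin.univ_val_map, Multiset.coe_eq_coe] at h
  have h1 : (List.ofFn (x ∘ Tuple.sort x)).Perm (List.ofFn (y ∘ Tuple.sort y)) :=
    ((Tuple.sort x).ofFn_comp_perm x).trans (h.trans ((Tuple.sort y).ofFn_comp_perm y).symm)
  have h2 : List.ofFn (x ∘ Tuple.sort x) = List.ofFn (y ∘ Tuple.sort y) :=
    List.Perm.eq_of_sortedLE (Tuple.monotone_sort x).sortedLE_ofFn
      (Tuple.monotone_sort y).sortedLE_ofFn h1
  have h3 : x ∘ Tuple.sort x = y ∘ Tuple.sort y := List.ofFn_injective h2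
  refine ⟨Tuple.sort x * (Tuple.sort y)⁻¹, funext fun i => ?_⟩
  have := congrFun h3 ((Tuple.sort y)⁻¹ i)
  simpa using this

lemma exists_perm_of_phiAux_eq {M : ℕ} {x y : Fin M → ℝ} (h : phiAux M x = phiAux M y) :
    ∃ σ : Equiv.Perm (Fin M), x ∘ σ = y := by
  have hps : ∀ k, 1 ≤ k → k ≤ M → ∑ j, x j ^ k = ∑ j, y j ^ k := by
    intro k h1 h2
    have hk : k - 1 < M := by omega
    have := congrFun h ⟨k - 1, hk⟩
    simpa only [phiAux, Nat.sub_add_cancel h1] using this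
  have hes := esymm_eq_of_psum_eq M x y hps
  set s : Multiset ℝ := Multiset.map x Finset.univ.val with hs
  set t : Multiset ℝ := Multiset.map y Finset.univ.val with ht
  have hcards : Multiset.card s = M := by simp [hs]
  have hcardt : Multiset.card t = M := by simp [ht]
  have hesymm : ∀ k, k ≤ M → s.esymm k = t.esymm k := by
    intro k hk
    have := hes k hk
    rwa [MvPolynomial.aeval_esymm_eq_multiset_esymm, MvPolynomial.aeval_esymm_eq_multiset_esymm]
      at this
  have hpoly : (s.map fun a => Polynomial.X - Polynomial.C a).prod
      = (t.map fun a => Polynomial.X - Polynomial.C a).prod := by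
    apply Polynomial.ext
    intro k
    rcases le_or_gt k M with hkM | hkM
    · rw [Multiset.prod_X_sub_C_coeff s (by omega), Multiset.prod_X_sub_C_coeff t (by omega),
        hcards, hcardt, hesymm (M - k) (by omega)]
    · rw [Polynomial.coeff_eq_zero_of_natDegree_lt, Polynomial.coeff_eq_zero_of_natDegree_lt]
      · rw [Polynomial.natDegree_multiset_prod_X_sub_C_eq_card, hcardt]; exact hkM
      · rw [Polynomial.natDegree_multiset_prod_X_sub_C_eq_card, hcards]; exact hkM
  have hst : s = t := by
    have := congrArg Polynomial.roots hpoly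
    rwa [Polynomial.roots_multiset_prod_X_sub_C, Polynomial.roots_multiset_prod_X_sub_C] at this
  exact exists_perm_of_multiset_eq hst

lemma phiAux_proper {M : ℕ} (hM : 2 ≤ M) : IsProperMap (phiAux M) := by
  rw [isProperMap_iff_isCompact_preimage]
  refine ⟨phiAux_continuous M, fun K hK => ?_⟩
  obtain ⟨C, hC⟩ := hK.isBounded.exists_norm_le
  apply Metric.isCompact_of_isClosed_isBounded
  · exact hK.isClosed.preimage (phiAux_continuous M)
  · apply Bornology.IsBounded.subset (Metric.isBounded_closedBall
      (x := (0 : Fin M → ℝ)) (r := Real.sqrt C))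
    intro x hx
    rw [Metric.mem_closedBall, dist_zero_right]
    rw [pi_norm_le_iff_of_nonneg (Real.sqrt_nonneg C)]
    intro i
    rw [Real.norm_eq_abs]
    apply Real.abs_le_sqrt
    have h2 : (x i) ^ 2 ≤ phiAux M x ⟨1, by omega⟩ := by
      simp only [phiAux]
      have : ((⟨1, by omega⟩ : Fin M) : ℕ) + 1 = 2 := rfl
      rw [this]
      exact Finset.single_le_sum (fun j _ => sq_nonneg (x j)) (Finset.mem_univ i)
    calc (x i) ^ 2 ≤ phiAux M x ⟨1, by omega⟩ := h2
      _ ≤ |phiAux M x ⟨1, by omega⟩| := le_abs_self _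
      _ ≤ ‖phiAux M x‖ := by rw [← Real.norm_eq_abs]; exact norm_le_pi_norm _ _
      _ ≤ C := hC _ hx


/-- A continuous function `f : (Fin M → ℝ) → ℝ` is permutation-invariant iff it is
continuously sum-decomposable through `ℝ^M`. -/
theorem perm_invariant_iff_continuous_sum_decomposable (M : ℕ) (hM : 0 < M)
    (f : (Fin M → ℝ) → ℝ) (hf : Continuous f) :
    (∀ (σ : Equiv.Perm (Fin M)) (x : Fin M → ℝ), f (x ∘ σ) = f x) ↔
      ∃ (ψ : ℝ → (Fin M → ℝ)) (ρ : (Fin M → ℝ) → ℝ),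
        Continuous ψ ∧ Continuous ρ ∧ ∀ x : Fin M → ℝ, f x = ρ (∑ i, ψ (x i)) := by
  constructor
  · intro hinv
    rcases eq_or_lt_of_le (Nat.succ_le_of_lt hM) with hM1 | hM2
    · -- M = 1
      obtain rfl : M = 1 := hM1.symm
      refine ⟨fun t _ => t, f, continuous_pi fun _ => continuous_id, hf, fun x => ?_⟩
      congr 1
      funext j
      rw [Fin.sum_univ_one]
      exact congrArg x (Fin.eq_zero j)
    · -- 2 ≤ M
      have hM2 : 2 ≤ M := hM2
      set Φ := phiAux M with hΦ
      have hproper : IsProperMap Φ := phiAux_proper hM2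
      set S : Set (Fin M → ℝ) := Set.range Φ with hSdef
      have hScl : IsClosed S := hproper.isClosed_range
      set Φ' : (Fin M → ℝ) → S := Set.rangeFactorization Φ with hΦ'
      have hsurj : Function.Surjective Φ' := Set.rangeFactorization_surjective
      have hcont' : Continuous Φ' := (phiAux_continuous M).subtype_mk _
      have hproper' : IsProperMap Φ' := by
        rw [isProperMap_iff_isCompact_preimage]
        refine ⟨hcont', fun K hK => ?_⟩
        have hK' : IsCompact ((Subtype.val : S → (Fin M → ℝ)) '' K) :=
          hK.image continuous_subtype_val
        have := hproper.isCompact_preimage hK'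
        convert this using 1
        ext z
        simp only [Set.mem_preimage, Set.mem_image]
        constructor
        · intro hz; exact ⟨Φ' z, hz, rfl⟩
        · rintro ⟨w, hw, hwz⟩
          have hwz' : w = Φ' z := Subtype.ext hwz
          rwa [hwz'] at hw
      have hQ : Topology.IsQuotientMap Φ' := hproper'.isClosedMap.isQuotientMap hcont' hsurj
      set ρ₀ : S → ℝ := f ∘ Function.surjInv hsurj with hρ₀
      have hρ₀Φ : ∀ x, ρ₀ (Φ' x) = f x := by
        intro x
        have hz : Φ' (Function.surjInv hsurj (Φ' x)) = Φ' x := Function.surjInv_eq hsurj _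
        have hzΦ : Φ (Function.surjInv hsurj (Φ' x)) = Φ x := congrArg Subtype.val hz
        obtain ⟨σ, hσ⟩ := exists_perm_of_phiAux_eq hzΦ
        calc ρ₀ (Φ' x) = f (Function.surjInv hsurj (Φ' x)) := rfl
          _ = f ((Function.surjInv hsurj (Φ' x)) ∘ σ) := (hinv σ _).symm
          _ = f x := by rw [hσ]
      have hρ₀cont : Continuous ρ₀ := by
        rw [hQ.continuous_iff]
        have : ρ₀ ∘ Φ' = f := funext hρ₀Φ
        rw [this]; exact hf
      obtain ⟨g, hg⟩ := ContinuousMap.exists_restrict_eq hScl ⟨ρ₀, hρ₀cont⟩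
      refine ⟨fun t i => t ^ ((i : ℕ) + 1), g, ?_, g.continuous, ?_⟩
      · exact continuous_pi fun i => continuous_pow _
      · intro x
        have hsum : (∑ i, fun j : Fin M => (x i) ^ ((j : ℕ) + 1)) = Φ x := by
          funext j
          rw [Finset.sum_apply]
          rfl
        rw [hsum]
        have hmem : Φ x ∈ S := Set.mem_range_self x
        have := congrFun (congrArg DFunLike.coe hg) ⟨Φ x, hmem⟩
        simp only [ContinuousMap.restrict_apply, ContinuousMap.coe_mk] at this
        rw [this]
        exact (hρ₀Φ x).symm
  · rintro ⟨ψ, ρ, hψ, hρ, hdecomp⟩ σ x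
    rw [hdecomp, hdecomp]
    congr 1
    exact Fintype.sum_equiv σ _ _ (fun i => rfl)
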